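/- Let 0 < p_b ≤ p_t < 1 and let M be the 2×2 matrix with first row (1−p_b, p_b) and second row (p_t, 1−p_t). Let π = (π(0), π(1)) with π(0), π(1) ≥ 0 and π(0) + π(1) = 1, let m₀ be a nonnegative integer, and set q = π M^{m₀}. Then q(0)² / (p_t/(p_b+p_t)) + q(1)² / (p_b/(p_b+p_t)) ≤ 1 + (1−p_b−p_t)^{2m₀} · p_t/p_b, with equality when π = (0, 1). -/

import Mathlib

open Matrix

lemma two_state_aux (p_b p_t : ℝ) (hs : p_b + p_t ≠ 0)
    (pv : Fin 2 → ℝ) (hpv : pv 0 + pv 1 = 1) :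
    ∀ m : ℕ,
      (pv ᵥ* (!![1 - p_b, p_b; p_t, 1 - p_t] ^ m)) 0
        = p_t / (p_b + p_t) + (1 - p_b - p_t) ^ m * (pv 0 - p_t / (p_b + p_t)) ∧
      (pv ᵥ* (!![1 - p_b, p_b; p_t, 1 - p_t] ^ m)) 1
        = p_b / (p_b + p_t) - (1 - p_b - p_t) ^ m * (pv 0 - p_t / (p_b + p_t)) := by
  have hone : p_t / (p_b + p_t) + p_b / (p_b + p_t) = 1 := by field_simp; ring
  intro m
  induction m with
  | zero =>
    simp only [pow_zero, Matrix.vecMul_one]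
    constructor
    · ring
    · rw [one_mul]; linarith
  | succ n ih =>
    obtain ⟨ih0, ih1⟩ := ih
    rw [pow_succ, ← Matrix.vecMul_vecMul]
    simp only [Matrix.vecMul, dotProduct, Fin.sum_univ_two,
      Matrix.cons_val_zero, Matrix.cons_val_one, Matrix.head_cons,
      Matrix.cons_val', Matrix.empty_val', Matrix.cons_val_fin_one,
      Matrix.head_fin_const, Matrix.of_apply] at ih0 ih1 ⊢
    rw [ih0, ih1]
    constructor
    · field_simp
      ring
    · field_simp
      ring

theorem two_state_markov_density_bound
    (p_b p_t : ℝ) (hpb0 : 0 < p_b) (hbt : p_b ≤ p_t) (hpt1 : p_t < 1)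
    (M : Matrix (Fin 2) (Fin 2) ℝ)
    (hM : M = !![1 - p_b, p_b; p_t, 1 - p_t])
    (pv : Fin 2 → ℝ) (hpv0 : 0 ≤ pv 0) (hpv1 : 0 ≤ pv 1) (hpv : pv 0 + pv 1 = 1)
    (m₀ : ℕ)
    (q : Fin 2 → ℝ) (hq : q = pv ᵥ* (M ^ m₀)) :
    q 0 ^ 2 / (p_t / (p_b + p_t)) + q 1 ^ 2 / (p_b / (p_b + p_t)) ≤
        1 + (1 - p_b - p_t) ^ (2 * m₀) * p_t / p_b ∧
    (pv = ![0, 1] →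
      q 0 ^ 2 / (p_t / (p_b + p_t)) + q 1 ^ 2 / (p_b / (p_b + p_t)) =
        1 + (1 - p_b - p_t) ^ (2 * m₀) * p_t / p_b) := by
  have hpt0 : 0 < p_t := lt_of_lt_of_le hpb0 hbt
  have hs : 0 < p_b + p_t := by linarith
  have hsne : p_b + p_t ≠ 0 := ne_of_gt hs
  obtain ⟨h0, h1⟩ := two_state_aux p_b p_t hsne pv hpv m₀
  rw [hM] at hq
  set π0 := p_t / (p_b + p_t) with hπ0
  set π1 := p_b / (p_b + p_t) with hπ1
  set L := (1 - p_b - p_t) ^ m₀ with hL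
  set c := pv 0 - π0 with hc
  clear_value π0 π1 L c
  have hq0 : q 0 = π0 + L * c := by rw [hq]; exact h0
  have hq1 : q 1 = π1 - L * c := by rw [hq]; exact h1
  have hL2 : (1 - p_b - p_t) ^ (2 * m₀) = L ^ 2 := by rw [hL, ← pow_mul, mul_comm]
  have hπ0pos : 0 < π0 := hπ0 ▸ div_pos hpt0 hs
  have hπ1pos : 0 < π1 := hπ1 ▸ div_pos hpb0 hs
  have key : ∀ d : ℝ, (π0 + L * d) ^ 2 / π0 + (π1 - L * d) ^ 2 / π1
      = π0 + π1 + L ^ 2 * d ^ 2 * (1 / π0 + 1 / π1) := by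
    intro d
    field_simp
    ring
  have hsum : π0 + π1 = 1 := by rw [hπ0, hπ1]; field_simp; ring
  have hinv : 1 / π0 + 1 / π1 = (p_b + p_t) ^ 2 / (p_b * p_t) := by
    rw [hπ0, hπ1]
    field_simp
  have hπ0sq : π0 ^ 2 = p_t ^ 2 / (p_b + p_t) ^ 2 := by rw [hπ0, div_pow]
  constructor
  · rw [hq0, hq1, key, hsum, hinv, hL2]
    have hcbound : c ^ 2 ≤ π0 ^ 2 := by
      have h1' : -π0 ≤ c := by rw [hc]; linarith
      have h2 : c ≤ π1 := by
        have h3 : (1:ℝ) - π0 = π1 := by linarith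
        rw [hc]
        have : pv 0 ≤ 1 := by linarith
        linarith
      have hπ10 : π1 ≤ π0 := by
        rw [hπ0, hπ1, div_le_div_iff₀ hs hs]
        nlinarith
      nlinarith
    have h4 : c ^ 2 * (p_b + p_t) ^ 2 ≤ p_t ^ 2 := by
      have h5 : c ^ 2 ≤ p_t ^ 2 / (p_b + p_t) ^ 2 := by rw [← hπ0sq]; exact hcbound
      exact (le_div_iff₀ (by positivity)).mp h5
    have hX : c ^ 2 * ((p_b + p_t) ^ 2 / (p_b * p_t)) ≤ p_t / p_b := by
      have heq : c ^ 2 * ((p_b + p_t) ^ 2 / (p_b * p_t))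
          = c ^ 2 * (p_b + p_t) ^ 2 / (p_b * p_t) := by ring
      rw [heq, div_le_div_iff₀ (by positivity) hpb0]
      nlinarith [mul_le_mul_of_nonneg_right h4 hpb0.le]
    have hL2nn : 0 ≤ L ^ 2 := sq_nonneg L
    have hmul := mul_le_mul_of_nonneg_left hX hL2nn
    have heq1 : L ^ 2 * c ^ 2 * ((p_b + p_t) ^ 2 / (p_b * p_t))
        = L ^ 2 * (c ^ 2 * ((p_b + p_t) ^ 2 / (p_b * p_t))) := by ring
    have heq2 : L ^ 2 * p_t / p_b = L ^ 2 * (p_t / p_b) := by ring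
    linarith
  · intro hpveq
    have hpv0' : pv 0 = 0 := by rw [hpveq]; rfl
    have hceq : c = -π0 := by rw [hc, hpv0']; ring
    rw [hq0, hq1, key, hsum, hinv, hL2, hceq]
    have hneg : (-π0) ^ 2 = p_t ^ 2 / (p_b + p_t) ^ 2 := by rw [neg_pow]; simp [hπ0sq]
    rw [hneg]
    field_simp
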